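/- Suppose F is β-smooth (β > 0). Let c' > 0, let w ∈ ℝ^d with ∇F(w) ≠ 0, let the batch size B ≥ 1 satisfy B·‖∇F(w)‖² ≥ c'·M²(w), and let γ > 0. Then ‖∇F(w)‖²·(γ − (βγ²/2)·(1/c' + 1)) ≤ F(w) − E_s[F(w − γ g_s(w))]. -/

import Mathlib

open scoped BigOperators RealInnerProductSpace

section Aux

open Finset

lemma minibatch_sumA {ι : Type*} [Fintype ι] (B : ℕ) (h : ι → ℝ) :
    (Fintype.card ι : ℝ) * ∑ s : Fin B → ι, ∑ j, h (s j)
      = (B : ℝ) * (Fintype.card ι : ℝ) ^ B * ∑ i, h i := by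
  induction B with
  | zero => simp
  | succ B ih =>
    have he : ∑ s : Fin (B+1) → ι, ∑ j, h (s j)
        = ∑ p : ι × (Fin B → ι), (h p.1 + ∑ j, h (p.2 j)) := by
      rw [← (Fin.consEquiv (fun _ : Fin (B+1) => ι)).symm.sum_comp]
      apply Finset.sum_congr rfl
      intro p _
      rw [Fin.sum_univ_succ]
      simp [Fin.consEquiv, Fin.cons_zero, Fin.cons_succ, Fin.tail]
    rw [he, Finset.sum_add_distrib]
    rw [Fintype.sum_prod_type]
    simp only [Finset.sum_const, Finset.card_univ, Fintype.card_fun, Fintype.card_fin,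
      nsmul_eq_mul]
    rw [Fintype.sum_prod_type_right]
    simp only [Finset.sum_const, Finset.card_univ, nsmul_eq_mul]
    rw [← Finset.mul_sum, ← Finset.mul_sum]
    push_cast
    linear_combination (Fintype.card ι : ℝ) * ih

lemma minibatch_sumB {ι : Type*} [Fintype ι] {E : Type*} [NormedAddCommGroup E]
    [InnerProductSpace ℝ E] (B : ℕ) (G : ι → E) :
    (Fintype.card ι : ℝ) ^ 2 * ∑ s : Fin B → ι, ‖∑ j, G (s j)‖ ^ 2
      = (B : ℝ) * ((B : ℝ) - 1) * (Fintype.card ι : ℝ) ^ B * ‖∑ i, G i‖ ^ 2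
        + (B : ℝ) * (Fintype.card ι : ℝ) ^ (B + 1) * ∑ i, ‖G i‖ ^ 2 := by
  set n : ℝ := (Fintype.card ι : ℝ) with hn
  induction B with
  | zero => simp
  | succ B ih =>
    have he : ∑ s : Fin (B+1) → ι, ‖∑ j, G (s j)‖ ^ 2
        = ∑ p : ι × (Fin B → ι), ‖G p.1 + ∑ j, G (p.2 j)‖ ^ 2 := by
      rw [← (Fin.consEquiv (fun _ : Fin (B+1) => ι)).symm.sum_comp]
      apply Finset.sum_congr rfl
      intro p _
      rw [Fin.sum_univ_succ]
      simp [Fin.consEquiv, Fin.cons_zero, Fin.cons_succ, Fin.tail]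
    have hexp : ∀ p : ι × (Fin B → ι), ‖G p.1 + ∑ j, G (p.2 j)‖ ^ 2
        = ‖G p.1‖ ^ 2 + 2 * ⟪G p.1, ∑ j, G (p.2 j)⟫ + ‖∑ j, G (p.2 j)‖ ^ 2 := by
      intro p
      rw [norm_add_sq_real]
    rw [he]
    simp only [hexp]
    rw [Finset.sum_add_distrib, Finset.sum_add_distrib]
    have t1 : ∑ p : ι × (Fin B → ι), ‖G p.1‖ ^ 2 = n ^ B * ∑ i, ‖G i‖ ^ 2 := by
      rw [Fintype.sum_prod_type]
      simp only [Finset.sum_const, Finset.card_univ, Fintype.card_fun, Fintype.card_fin,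
        nsmul_eq_mul, ← Finset.mul_sum]
      push_cast [hn]
      ring
    have t2 : n * ∑ p : ι × (Fin B → ι), 2 * ⟪G p.1, ∑ j, G (p.2 j)⟫
        = 2 * (B : ℝ) * n ^ B * ‖∑ i, G i‖ ^ 2 := by
      rw [Fintype.sum_prod_type]
      have hone : ∀ i : ι, n * ∑ s : Fin B → ι, ⟪G i, ∑ j, G (s j)⟫
          = (B : ℝ) * n ^ B * ⟪G i, ∑ k, G k⟫ := by
        intro i
        have := minibatch_sumA B (fun k => ⟪G i, G k⟫)
        simp only [inner_sum] at *
        exact this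
      calc n * ∑ i, ∑ s : Fin B → ι, 2 * ⟪G i, ∑ j, G (s j)⟫
          = ∑ i, 2 * (n * ∑ s : Fin B → ι, ⟪G i, ∑ j, G (s j)⟫) := by
            rw [Finset.mul_sum]; apply Finset.sum_congr rfl; intro i _
            rw [Finset.mul_sum, Finset.mul_sum, Finset.mul_sum]
            apply Finset.sum_congr rfl; intro s _; ring
        _ = ∑ i, 2 * ((B : ℝ) * n ^ B * ⟪G i, ∑ k, G k⟫) := by
            apply Finset.sum_congr rfl; intro i _; rw [hone i]
        _ = 2 * (B : ℝ) * n ^ B * ∑ i, ⟪G i, ∑ k, G k⟫ := by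
            rw [Finset.mul_sum]; apply Finset.sum_congr rfl; intro i _; ring
        _ = 2 * (B : ℝ) * n ^ B * ‖∑ i, G i‖ ^ 2 := by
            rw [← sum_inner, real_inner_self_eq_norm_sq]
    have t3 : ∑ p : ι × (Fin B → ι), ‖∑ j, G (p.2 j)‖ ^ 2
        = n * ∑ s : Fin B → ι, ‖∑ j, G (s j)‖ ^ 2 := by
      rw [Fintype.sum_prod_type_right]
      simp only [Finset.sum_const, Finset.card_univ, nsmul_eq_mul, ← Finset.mul_sum, hn]
    rw [t1, t3]
    push_cast
    linear_combination n * t2 + n * ih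

theorem minibatch_descent_aux {E : Type*} [NormedAddCommGroup E] [InnerProductSpace ℝ E]
    [CompleteSpace E]
    (F : E → ℝ) (β : ℝ) (hβ : 0 < β) (hFdiff : Differentiable ℝ F)
    (hsmooth : ∀ x y, ‖gradient F x - gradient F y‖ ≤ β * ‖x - y‖)
    (x v : E) :
    F (x + v) ≤ F x + ⟪gradient F x, v⟫ + β / 2 * ‖v‖ ^ 2 := by
  set φ' : ℝ → ℝ := fun t => ⟪gradient F (x + t • v), v⟫ with hφ'
  have hderiv : ∀ t : ℝ, HasDerivAt (fun t : ℝ => F (x + t • v)) (φ' t) t := by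
    intro t
    have h1 : HasDerivAt (fun t : ℝ => x + t • v) v t := by
      simpa using ((hasDerivAt_id t).smul_const v).const_add x
    have h2 := (hFdiff (x + t • v)).hasGradientAt.hasFDerivAt.comp_hasDerivAt t h1
    refine h2.congr_deriv ?_
    simp [hφ']
  have hlip : LipschitzWith β.toNNReal (gradient F) := by
    apply LipschitzWith.of_dist_le_mul
    intro a b
    rw [dist_eq_norm, dist_eq_norm, Real.coe_toNNReal _ hβ.le]
    exact hsmooth a b
  have hcont : Continuous φ' := by
    apply Continuous.inner
    · exact hlip.continuous.comp (by continuity)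
    · exact continuous_const
  have hint : IntervalIntegrable φ' MeasureTheory.volume 0 1 :=
    hcont.intervalIntegrable 0 1
  have hcont2 : Continuous (fun t : ℝ => ⟪gradient F x, v⟫ + β * t * ‖v‖ ^ 2) := by
    continuity
  have hFTC : ∫ t in (0:ℝ)..1, φ' t = F (x + v) - F x := by
    have := intervalIntegral.integral_eq_sub_of_hasDerivAt (fun t _ => hderiv t) hint
    simpa using this
  have hbound : ∀ t ∈ Set.Icc (0:ℝ) 1, φ' t ≤ ⟪gradient F x, v⟫ + β * t * ‖v‖ ^ 2 := by
    intro t ht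
    have heq : φ' t - ⟪gradient F x, v⟫ = ⟪gradient F (x + t • v) - gradient F x, v⟫ := by
      rw [inner_sub_left]
    have hcs : ⟪gradient F (x + t • v) - gradient F x, v⟫ ≤
        ‖gradient F (x + t • v) - gradient F x‖ * ‖v‖ := real_inner_le_norm _ _
    have hn : ‖gradient F (x + t • v) - gradient F x‖ ≤ β * (t * ‖v‖) := by
      have := hsmooth (x + t • v) x
      simpa [norm_smul, abs_of_nonneg ht.1] using this
    nlinarith [norm_nonneg v, norm_nonneg (gradient F (x + t • v) - gradient F x),
      mul_nonneg hβ.le ht.1]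
  have hmono : ∫ t in (0:ℝ)..1, φ' t ≤
      ∫ t in (0:ℝ)..1, (⟪gradient F x, v⟫ + β * t * ‖v‖ ^ 2) :=
    intervalIntegral.integral_mono_on (by norm_num) hint (hcont2.intervalIntegrable 0 1) hbound
  have hcalc : ∫ t in (0:ℝ)..1, (⟪gradient F x, v⟫ + β * t * ‖v‖ ^ 2)
      = ⟪gradient F x, v⟫ + β / 2 * ‖v‖ ^ 2 := by
    have h1 : (fun t : ℝ => ⟪gradient F x, v⟫ + β * t * ‖v‖ ^ 2)
        = fun t : ℝ => ⟪gradient F x, v⟫ + (β * ‖v‖ ^ 2) * t := by funext t; ring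
    rw [h1, intervalIntegral.integral_add (intervalIntegrable_const)
      ((by fun_prop : Continuous fun t : ℝ => (β * ‖v‖ ^ 2) * t).intervalIntegrable 0 1),
      intervalIntegral.integral_const_mul, integral_id]
    simp; ring
  linarith

end Aux

set_option maxHeartbeats 2000000 in
/-- For `F` β-smooth, if the batch size satisfies `B‖∇F(w)‖² ≥ c' M²(w)`,
then `‖∇F(w)‖²(γ − (βγ²/2)(1/c' + 1)) ≤ F(w) − E_s[F(w − γ g_s(w))]`. -/
theorem minibatch_smooth_descent
    (d n B : ℕ) (hd : 1 ≤ d) (hn : 1 ≤ n) (hB : 1 ≤ B)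
    (f : Fin n → EuclideanSpace ℝ (Fin d) → ℝ)
    (hf : ∀ i, Differentiable ℝ (f i))
    (F : EuclideanSpace ℝ (Fin d) → ℝ)
    (hF : F = fun w => (1 / (n : ℝ)) * ∑ i, f i w)
    (β : ℝ) (hβ : 0 < β)
    (hFdiff : Differentiable ℝ F)
    (hsmooth : ∀ x y, ‖gradient F x - gradient F y‖ ≤ β * ‖x - y‖)
    (c' : ℝ) (hc' : 0 < c')
    (w : EuclideanSpace ℝ (Fin d)) (hgrad : gradient F w ≠ 0)
    (hBc : c' * ((1 / (n : ℝ)) * ∑ i, ‖gradient (f i) w‖ ^ 2)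
            ≤ (B : ℝ) * ‖gradient F w‖ ^ 2)
    (γ : ℝ) (hγ : 0 < γ) :
    ‖gradient F w‖ ^ 2 * (γ - (β * γ ^ 2 / 2) * (1 / c' + 1))
      ≤ F w -
        (1 / (n : ℝ) ^ B) *
          ∑ s : Fin B → Fin n,
            F (w - γ • ((1 / (B : ℝ)) • ∑ j, gradient (f (s j)) w)) := by
  set N : ℝ := (n : ℝ) with hNdef
  have hN : 0 < N := by
    have : (1:ℝ) ≤ (n:ℝ) := by exact_mod_cast hn
    linarith
  have hBr : (1:ℝ) ≤ (B:ℝ) := by exact_mod_cast hB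
  have hBpos : (0:ℝ) < (B:ℝ) := by linarith
  set G : Fin n → EuclideanSpace ℝ (Fin d) := fun i => gradient (f i) w with hG
  have hGa : ∀ i, gradient (f i) w = G i := fun _ => rfl
  simp only [hGa] at hBc ⊢
  set g := gradient F w with hg
  set K : ℝ := N ^ B with hK
  have hKpos : 0 < K := by positivity
  -- the gradient of F at w
  have hgradF : HasGradientAt F ((1/N) • ∑ i, G i) w := by
    rw [hF]
    have h : HasFDerivAt (fun w => (1 / N) * ∑ i, f i w)
        ((1/N) • ∑ i, fderiv ℝ (f i) w) w :=
      (HasFDerivAt.fun_sum (fun i _ => ((hf i) w).hasFDerivAt)).const_mul _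
    rw [hasGradientAt_iff_hasFDerivAt]
    have hT : (InnerProductSpace.toDual ℝ (EuclideanSpace ℝ (Fin d))) ((1/N) • ∑ i, G i)
        = (1/N) • ∑ i, fderiv ℝ (f i) w := by
      simp [hG, gradient, map_smul, map_sum]
    rw [hT]
    exact h
  have hgeq : g = (1/N) • ∑ i, G i := hgradF.gradient
  have hSig1 : ∑ i, G i = N • g := by
    rw [hgeq, smul_smul, mul_one_div, div_self hN.ne', one_smul]
  set Sig2 : ℝ := ∑ i, ‖G i‖^2 with hSig2def
  have hSig2 : 0 ≤ Sig2 := Finset.sum_nonneg fun i _ => by positivity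
  -- first moment
  have hS1 : ∑ s : Fin B → Fin n, ⟪g, ∑ j, G (s j)⟫ = (B:ℝ) * K * ‖g‖^2 := by
    have h := minibatch_sumA (ι := Fin n) B (fun i => ⟪g, G i⟫)
    simp only [Fintype.card_fin] at h
    have h2 : ∀ s : Fin B → Fin n, ⟪g, ∑ j, G (s j)⟫ = ∑ j, ⟪g, G (s j)⟫ :=
      fun s => inner_sum _ _ _
    have h3 : ∑ i, ⟪g, G i⟫ = N * ‖g‖^2 := by
      rw [← inner_sum, hSig1, real_inner_smul_right, real_inner_self_eq_norm_sq]
    apply mul_left_cancel₀ hN.ne'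
    simp only [h2]
    rw [h, h3, hK]
    ring
  -- second moment bound
  have hSig1n : ‖∑ i, G i‖^2 = N^2 * ‖g‖^2 := by
    rw [hSig1, norm_smul, Real.norm_eq_abs, abs_of_pos hN, mul_pow]
  have hc2 : c' * Sig2 ≤ (B:ℝ) * ‖g‖^2 * N := by
    have h := mul_le_mul_of_nonneg_left hBc hN.le
    have he : N * (c' * ((1/N) * Sig2)) = c' * Sig2 := by
      field_simp
    rw [he] at h
    linarith [h]
  have hS2 : ∑ s : Fin B → Fin n, ‖∑ j, G (s j)‖^2
      ≤ K * ((B:ℝ)^2 * (1/c' + 1) * ‖g‖^2) := by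
    have h := minibatch_sumB (ι := Fin n) B G
    simp only [Fintype.card_fin] at h
    rw [hSig1n] at h
    rw [← mul_le_mul_iff_right₀ (show (0:ℝ) < c' * N^2 by positivity)]
    set S2 : ℝ := ∑ s : Fin B → Fin n, ‖∑ j, G (s j)‖^2 with hS2def
    have hch : c' * N^2 * S2
        = c' * ((B:ℝ)*((B:ℝ)-1)) * (K*(N^2*‖g‖^2)) + ((B:ℝ)*K*N)*(c'*Sig2) := by
      rw [hK]
      linear_combination c' * h
    have fact : ((B:ℝ)*K*N)*(c'*Sig2) ≤ ((B:ℝ)*K*N)*((B:ℝ)*‖g‖^2*N) :=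
      mul_le_mul_of_nonneg_left hc2 (by positivity)
    have hb : (B:ℝ)*((B:ℝ)-1) ≤ (B:ℝ)*(B:ℝ) := by nlinarith
    have fact2 : c' * ((B:ℝ)*((B:ℝ)-1)) * (K*(N^2*‖g‖^2))
        ≤ c' * ((B:ℝ)*(B:ℝ)) * (K*(N^2*‖g‖^2)) := by
      have hnn : (0:ℝ) ≤ K*(N^2*‖g‖^2) := by positivity
      exact mul_le_mul_of_nonneg_right (mul_le_mul_of_nonneg_left hb hc'.le) hnn
    have hrhs : c' * N^2 * (K * ((B:ℝ)^2 * (1/c' + 1) * ‖g‖^2))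
        = ((B:ℝ)*K*N)*((B:ℝ)*‖g‖^2*N) + c' * ((B:ℝ)*(B:ℝ)) * (K*(N^2*‖g‖^2)) := by
      field_simp
    linarith [hch, fact, fact2, hrhs]
  -- descent step for each batch
  have hdesc : ∀ s : Fin B → Fin n,
      F (w - γ • ((1/(B:ℝ)) • ∑ j, G (s j))) ≤
        F w - (γ/(B:ℝ)) * ⟪g, ∑ j, G (s j)⟫
          + β/2 * ((γ/(B:ℝ))^2 * ‖∑ j, G (s j)‖^2) := by
    intro s
    have h := minibatch_descent_aux F β hβ hFdiff hsmooth w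
      (-(γ • ((1/(B:ℝ)) • ∑ j, G (s j))))
    rw [← sub_eq_add_neg] at h
    refine h.trans (le_of_eq ?_)
    rw [inner_neg_right, real_inner_smul_right, real_inner_smul_right,
      norm_neg, norm_smul, norm_smul]
    rw [Real.norm_eq_abs, Real.norm_eq_abs, abs_of_pos hγ,
      abs_of_pos (show (0:ℝ) < 1/(B:ℝ) by positivity)]
    rw [← hg]
    ring
  -- sum over batches
  have hsum : ∑ s : Fin B → Fin n, F (w - γ • ((1/(B:ℝ)) • ∑ j, G (s j)))
      ≤ K * F w - (γ/(B:ℝ)) * ((B:ℝ)*K*‖g‖^2)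
        + β/2 * ((γ/(B:ℝ))^2 * ∑ s : Fin B → Fin n, ‖∑ j, G (s j)‖^2) := by
    calc ∑ s : Fin B → Fin n, F (w - γ • ((1/(B:ℝ)) • ∑ j, G (s j)))
        ≤ ∑ s : Fin B → Fin n, (F w - (γ/(B:ℝ)) * ⟪g, ∑ j, G (s j)⟫
            + β/2 * ((γ/(B:ℝ))^2 * ‖∑ j, G (s j)‖^2)) :=
          Finset.sum_le_sum fun s _ => hdesc s
      _ = K * F w - (γ/(B:ℝ)) * ∑ s : Fin B → Fin n, ⟪g, ∑ j, G (s j)⟫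
            + β/2 * ((γ/(B:ℝ))^2 * ∑ s : Fin B → Fin n, ‖∑ j, G (s j)‖^2) := by
          simp only [Finset.sum_add_distrib, Finset.sum_sub_distrib, Finset.sum_const,
            Finset.card_univ, Fintype.card_fun, Fintype.card_fin, nsmul_eq_mul,
            ← Finset.mul_sum]
          push_cast [hK, hNdef]
          ring
      _ = _ := by rw [hS1]
  -- divide by K and conclude
  have h2 := mul_le_mul_of_nonneg_left hsum (show (0:ℝ) ≤ 1/K by positivity)
  set S2 : ℝ := ∑ s : Fin B → Fin n, ‖∑ j, G (s j)‖^2 with hS2def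
  have he1 : (1/K) * (K * F w - (γ/(B:ℝ)) * ((B:ℝ)*K*‖g‖^2)
        + β/2 * ((γ/(B:ℝ))^2 * S2))
      = F w - γ*‖g‖^2 + (β*γ^2/(2*(B:ℝ)^2*K))*S2 := by
    field_simp
  have he2 : (β*γ^2/(2*(B:ℝ)^2*K))*S2 ≤ (β*γ^2/2)*(1/c'+1)*‖g‖^2 := by
    have hpos : (0:ℝ) ≤ β*γ^2/(2*(B:ℝ)^2*K) := by positivity
    have h3 := mul_le_mul_of_nonneg_left hS2 hpos
    have he : (β*γ^2/(2*(B:ℝ)^2*K)) * (K * ((B:ℝ)^2 * (1/c' + 1) * ‖g‖^2))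
        = (β*γ^2/2)*(1/c'+1)*‖g‖^2 := by
      field_simp
    rw [he] at h3
    exact h3
  have hA : (1/K) * ∑ s : Fin B → Fin n, F (w - γ • ((1/(B:ℝ)) • ∑ j, G (s j)))
      ≤ F w - γ*‖g‖^2 + (β*γ^2/2)*(1/c'+1)*‖g‖^2 := by
    rw [he1] at h2
    linarith [h2, he2]
  have hNK : (1 : ℝ) / (n:ℝ)^B = 1/K := by rw [hK, hNdef]
  rw [hNK]
  nlinarith [hA]
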